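/- For all n ≥ 1 and k ≥ 0, Σ_{j=1}^{n} (-1)^{j-1} C(n,j) · c_j^{(k)} = 1/n^k. Equivalently, the sequences {c_{n+1}^{(k)}/(n+1)} and {1/(n+1)^{k+1}} are binomial transforms of each other. -/

import Mathlib

/-- Roman harmonic number `c_n^{(k)}` as a rational number. -/
def romanHarmonic (n k : ℕ) : ℚ :=
  ∑ j ∈ Finset.Icc 1 n, (-1 : ℚ) ^ (j - 1) * (n.choose j) / (j : ℚ) ^ k

lemma alt_sum_choose_rat (m : ℕ) :
    ∑ i ∈ Finset.range (m + 1), (-1 : ℚ) ^ i * (m.choose i) =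
      if m = 0 then 1 else 0 := by
  have := Int.alternating_sum_range_choose (n := m)
  have h2 : ((∑ i ∈ Finset.range (m + 1), (-1 : ℤ) ^ i * (m.choose i) : ℤ) : ℚ)
      = ∑ i ∈ Finset.range (m + 1), (-1 : ℚ) ^ i * (m.choose i) := by
    push_cast
    exact Finset.sum_congr (by rw [Nat.add_comm]) fun x _ => by ring
  rw [← h2, this]
  split <;> simp

theorem roman_harmonic_binomial_transform (n k : ℕ) (hn : 1 ≤ n) :
    ∑ j ∈ Finset.Icc 1 n, (-1 : ℚ) ^ (j - 1) * (n.choose j) * romanHarmonic j k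
      = 1 / (n : ℚ) ^ k := by
  unfold romanHarmonic
  simp_rw [Finset.mul_sum]
  rw [Finset.sum_comm' (t' := Finset.Icc 1 n) (s' := fun i => Finset.Icc i n)
    (by intro j i; simp only [Finset.mem_Icc]; omega)]
  have key : ∀ i ∈ Finset.Icc 1 n,
      (∑ j ∈ Finset.Icc i n, (-1 : ℚ) ^ (j - 1) * (n.choose j) *
        ((-1 : ℚ) ^ (i - 1) * (j.choose i) / (i : ℚ) ^ k))
      = if i = n then 1 / (n : ℚ) ^ k else 0 := by
    intro i hi
    rw [Finset.mem_Icc] at hi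
    have hsum : ∑ j ∈ Finset.Icc i n, (-1 : ℚ) ^ (j - 1) * (n.choose j) *
        ((-1 : ℚ) ^ (i - 1) * (j.choose i) / (i : ℚ) ^ k)
        = ∑ m ∈ Finset.range (n - i + 1), (-1 : ℚ) ^ m *
            ((n - i).choose m) * ((n.choose i : ℚ) / (i : ℚ) ^ k) := by
      rw [show Finset.Icc i n = Finset.map ⟨fun m => i + m, add_right_injective i⟩
          (Finset.range (n - i + 1)) from ?_, Finset.sum_map]
      · apply Finset.sum_congr rfl
        intro m hm
        rw [Finset.mem_range] at hm
        simp only [Function.Embedding.coeFn_mk]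
        have hle : i + m ≤ n := by omega
        have hc : (n.choose (i + m) : ℚ) * ((i + m).choose i : ℚ)
            = (n.choose i : ℚ) * (((n - i).choose m : ℚ)) := by
          have := Nat.choose_mul (n := n) (k := i + m) (s := i) (by omega)
          have h2 : n.choose (i + m) * (i + m).choose i
              = n.choose i * ((n - i).choose (i + m - i)) := this
          rw [show i + m - i = m by omega] at h2
          exact_mod_cast congrArg (Nat.cast : ℕ → ℚ) h2
        have hsgn : (-1 : ℚ) ^ (i + m - 1) = (-1 : ℚ) ^ (i - 1) * (-1 : ℚ) ^ m := by
          rw [← pow_add]; congr 1; omega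
        have h1 : ((-1 : ℚ) ^ (i - 1)) * ((-1 : ℚ) ^ (i - 1)) = 1 := by
          rw [← pow_add, ← two_mul, pow_mul, neg_one_sq, one_pow]
        rw [hsgn]
        linear_combination ((-1:ℚ)^m * ((-1:ℚ)^(i-1) * (-1:ℚ)^(i-1)) / (i:ℚ)^k) * hc
          + ((-1:ℚ)^m * ((n.choose i : ℕ) : ℚ) * (((n-i).choose m : ℕ) : ℚ) / (i:ℚ)^k) * h1
      · ext x; simp only [Finset.mem_Icc, Finset.mem_map, Finset.mem_range,
          Function.Embedding.coeFn_mk]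
        constructor
        · rintro ⟨h1, h2⟩; exact ⟨x - i, by omega, by omega⟩
        · rintro ⟨m, hm, rfl⟩; omega
    rw [hsum, ← Finset.sum_mul, alt_sum_choose_rat]
    by_cases h : i = n
    · subst h; simp [Nat.sub_self]
    · rw [if_neg (by omega), if_neg h]; simp
  rw [Finset.sum_congr rfl key]
  simp [Finset.sum_ite_eq', Finset.mem_Icc, hn]
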